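/- Let G be a finite weighted directed graph where every vertex has an outgoing edge, and let σ be a positional policy. If for every vertex v and every edge (v,u), the appraisal inequality (val^σ(u), w(v,u) − val^σ(u) + pot^σ(u)) ≤_lex (val^σ(σ(v)), w(v,σ(v)) − val^σ(σ(v)) + pot^σ(σ(v))) holds (lexicographic comparison), then σ attains the maximal mean-payoff value at every vertex among all positional policies. -/

import Mathlib

/-- The mean-payoff value of the positional policy `σ` from vertex `v`:
the liminf of the running average weights along the run generated by `σ`
(which, for a lasso-shaped run, equals the mean weight of its cycle). -/
noncomputable def mpVal {V : Type*} (w : V → V → ℤ) (σ : V → V) (v : V) : ℝ :=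
  Filter.liminf
    (fun t : ℕ => ((∑ i ∈ Finset.range t, w (σ^[i] v) (σ^[i + 1] v) : ℤ) : ℝ) / t)
    Filter.atTop

open Filter Finset


/-- If `G - F → 0` and `F` is (uniformly) bounded, then `liminf G = liminf F`. -/
lemma liminf_eq_of_tendsto_sub {F G : ℕ → ℝ} {M : ℝ}
    (hF : ∀ t, |F t| ≤ M)
    (h : Filter.Tendsto (fun t => G t - F t) Filter.atTop (nhds 0)) :
    Filter.liminf G Filter.atTop = Filter.liminf F Filter.atTop := by
  have hFlb : ∀ t, -M ≤ F t := fun t => neg_le_of_abs_le (hF t)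
  have hFub : ∀ t, F t ≤ M := fun t => le_of_abs_le (hF t)
  have hFbb : Filter.IsBoundedUnder (· ≥ ·) Filter.atTop F :=
    Filter.isBoundedUnder_of ⟨-M, fun t => hFlb t⟩
  have hFcb : Filter.IsCoboundedUnder (· ≥ ·) Filter.atTop F :=
    Filter.isCoboundedUnder_ge_of_le _ hFub
  have h1 : ∀ᶠ t in Filter.atTop, |G t - F t| < 1 := by
    have := Metric.tendsto_nhds.mp h 1 one_pos
    simpa [Real.dist_eq] using this
  have hGbb : Filter.IsBoundedUnder (· ≥ ·) Filter.atTop G :=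
    Filter.isBoundedUnder_of_eventually_ge (a := -M - 1) (by
      filter_upwards [h1] with t ht
      have := abs_lt.1 ht
      linarith [hFlb t])
  have hGub : ∀ᶠ t in Filter.atTop, G t ≤ M + 1 := by
    filter_upwards [h1] with t ht
    have := abs_lt.1 ht
    linarith [hFub t]
  have hGcb : Filter.IsCoboundedUnder (· ≥ ·) Filter.atTop G :=
    Filter.isCoboundedUnder_ge_of_eventually_le _ hGub
  apply le_antisymm
  · apply le_of_forall_pos_le_add
    intro ε hε
    have hev : ∀ᶠ t in Filter.atTop, G t ≤ F t + ε := by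
      have := Metric.tendsto_nhds.mp h ε hε
      filter_upwards [this] with t ht
      rw [Real.dist_eq, sub_zero] at ht
      linarith [(abs_lt.1 ht).2]
    calc Filter.liminf G Filter.atTop
        ≤ Filter.liminf (fun t => F t + ε) Filter.atTop := by
          refine Filter.liminf_le_liminf hev hGbb ?_
          exact Filter.isCoboundedUnder_ge_of_le _ (x := M + ε) (fun t => by linarith [hFub t])
      _ = Filter.liminf F Filter.atTop + ε :=
          liminf_add_const Filter.atTop F ε hFcb hFbb
  · apply le_of_forall_pos_le_add
    intro ε hε
    have hev : ∀ᶠ t in Filter.atTop, F t ≤ G t + ε := by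
      have := Metric.tendsto_nhds.mp h ε hε
      filter_upwards [this] with t ht
      rw [Real.dist_eq, sub_zero] at ht
      linarith [(abs_lt.1 ht).1]
    calc Filter.liminf F Filter.atTop
        ≤ Filter.liminf (fun t => G t + ε) Filter.atTop := by
          refine Filter.liminf_le_liminf hev hFbb ?_
          refine Filter.isCoboundedUnder_ge_of_eventually_le _ (x := M + 1 + ε) ?_
          filter_upwards [hGub] with t ht; linarith
      _ = Filter.liminf G Filter.atTop + ε :=
          liminf_add_const Filter.atTop G ε hGcb hGbb


section shift
variable {V : Type*}

lemma mpVal_shift [Fintype V] (w : V → V → ℤ) (σ : V → V) (v : V) :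
    mpVal w σ (σ v) = mpVal w σ v := by
  obtain ⟨M, hM⟩ := (Set.finite_range fun p : V × V => |(w p.1 p.2 : ℝ)|).bddAbove
  have hMw : ∀ x y : V, |(w x y : ℝ)| ≤ M := fun x y => hM (Set.mem_range_self (x, y))
  have hM0 : (0 : ℝ) ≤ M := le_trans (abs_nonneg _) (hMw v v)
  set A : ℕ → ℝ := fun t => ((∑ i ∈ Finset.range t, w (σ^[i] v) (σ^[i + 1] v) : ℤ) : ℝ) with hA
  have hAb : ∀ t, |A t| ≤ t * M := by
    intro t
    have : |A t| ≤ ∑ i ∈ Finset.range t, |(w (σ^[i] v) (σ^[i + 1] v) : ℝ)| := by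
      rw [hA]; push_cast
      exact Finset.abs_sum_le_sum_abs _ _
    refine this.trans ?_
    calc ∑ i ∈ Finset.range t, |(w (σ^[i] v) (σ^[i + 1] v) : ℝ)|
        ≤ ∑ _i ∈ Finset.range t, M := Finset.sum_le_sum fun i _ => hMw _ _
      _ = t * M := by simp [mul_comm]
  set w0 : ℝ := (w v (σ v) : ℝ) with hw0
  have key : ∀ t : ℕ,
      ((∑ i ∈ Finset.range t, w (σ^[i] (σ v)) (σ^[i + 1] (σ v)) : ℤ) : ℝ) = A (t + 1) - w0 := by
    intro t
    have h1 : (∑ i ∈ Finset.range (t + 1), w (σ^[i] v) (σ^[i + 1] v))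
        = (∑ i ∈ Finset.range t, w (σ^[i + 1] v) (σ^[i + 1 + 1] v)) + w (σ^[0] v) (σ^[0 + 1] v) :=
      Finset.sum_range_succ' _ _
    have h2 : ∀ i : ℕ, w (σ^[i] (σ v)) (σ^[i + 1] (σ v)) = w (σ^[i + 1] v) (σ^[i + 1 + 1] v) := by
      intro i
      rw [← Function.iterate_succ_apply, ← Function.iterate_succ_apply]
    simp only [h2, hA, hw0]
    push_cast [h1]
    simp [Function.iterate_succ_apply]
  set F : ℕ → ℝ := fun t => A (t + 1) / (t + 1) with hF
  set G : ℕ → ℝ := fun t => (A (t + 1) - w0) / t with hG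
  have hmpτ : mpVal w σ (σ v) = Filter.liminf G Filter.atTop := by
    unfold mpVal
    congr 1
    funext t
    rw [key t, hG]
  have hFb : ∀ t, |F t| ≤ M := by
    intro t
    rw [hF, abs_div]
    have h1 : |A (t + 1)| ≤ (t + 1) * M := by
      have := hAb (t + 1); push_cast at this ⊢; linarith
    have h2 : |((t : ℝ) + 1)| = (t : ℝ) + 1 := abs_of_pos (by positivity)
    rw [h2, div_le_iff₀ (by positivity)]
    linarith
  have hsub : Filter.Tendsto (fun t => G t - F t) Filter.atTop (nhds 0) := by
    apply squeeze_zero_norm' (a := fun t : ℕ => (M + |w0|) / t)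
    · filter_upwards [Filter.eventually_ge_atTop 1] with t ht
      have ht' : (0 : ℝ) < t := by exact_mod_cast ht
      have ht1 : (0 : ℝ) < (t : ℝ) + 1 := by positivity
      have heq : G t - F t = (A (t + 1) - w0 * ((t : ℝ) + 1)) / ((t : ℝ) * ((t : ℝ) + 1)) := by
        rw [hG, hF]; push_cast; field_simp; ring
      rw [Real.norm_eq_abs, heq, abs_div,
        abs_of_pos (show (0:ℝ) < (t:ℝ) * ((t:ℝ)+1) by positivity),
        div_le_iff₀ (show (0:ℝ) < (t:ℝ) * ((t:ℝ)+1) by positivity)]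
      have h1 : |A (t + 1) - w0 * ((t : ℝ) + 1)| ≤ |A (t + 1)| + |w0| * ((t : ℝ) + 1) := by
        calc |A (t + 1) - w0 * ((t : ℝ) + 1)| ≤ |A (t + 1)| + |w0 * ((t : ℝ) + 1)| :=
              abs_sub _ _
          _ = |A (t + 1)| + |w0| * ((t : ℝ) + 1) := by
              rw [abs_mul, abs_of_pos ht1]
      have h2 : |A (t + 1)| ≤ ((t : ℝ) + 1) * M := by
        have := hAb (t + 1); push_cast at this ⊢; linarith
      have h3 : (M + |w0|) / (t : ℝ) * ((t : ℝ) * ((t : ℝ) + 1)) = (M + |w0|) * ((t : ℝ) + 1) := by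
        field_simp
      rw [h3]
      nlinarith [abs_nonneg w0]
    · exact tendsto_const_div_atTop_nhds_zero_nat _
  have hmps : mpVal w σ v = Filter.liminf (fun t : ℕ => A t / t) Filter.atTop := rfl
  rw [hmpτ, liminf_eq_of_tendsto_sub hFb hsub, hmps]
  have hFeq : F = fun i : ℕ => (fun t : ℕ => A t / t) (i + 1) := by
    funext i; rw [hF]; push_cast; ring_nf
  rw [hFeq]
  exact Filter.liminf_nat_add (fun t : ℕ => A t / t) 1

end shift

/-- Correctness criterion for Howard's policy iteration on deterministic MDPs
with mean-payoff objectives: if a positional policy `σ` is a fixed point of the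
Bellman operator, i.e. for every edge `(v, u)` the appraisal
`(val^σ(u), w(v,u) − val^σ(u) + pot^σ(u))` is lexicographically at most the
appraisal of the edge `(v, σ(v))` chosen by `σ`, then `σ` attains the maximal
mean-payoff value at every vertex among all positional policies.
Here `val` is the mean-payoff value of `σ` and `pot` is a potential function,
satisfying `pot(v) = w(v, σ(v)) − val(v) + pot(σ(v))` for every vertex `v`. -/
theorem stmt_18 {V : Type*} [Fintype V] (E : V → V → Prop) (w : V → V → ℤ)
    (hE : ∀ v, ∃ u, E v u) (σ : V → V) (hσ : ∀ v, E v (σ v))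
    (val pot : V → ℝ)
    (hval : ∀ v, val v = mpVal w σ v)
    (hpot : ∀ v, pot v = (w v (σ v) : ℝ) - val v + pot (σ v))
    (himp : ∀ v u, E v u →
      val u < val (σ v) ∨
        (val u = val (σ v) ∧
          (w v u : ℝ) - val u + pot u ≤ (w v (σ v) : ℝ) - val (σ v) + pot (σ v))) :
    ∀ v, ∀ τ : V → V, (∀ x, E x (τ x)) → mpVal w τ v ≤ mpVal w σ v := by
  intro v τ hτ
  obtain ⟨M, hM⟩ := (Set.finite_range fun p : V × V => |(w p.1 p.2 : ℝ)|).bddAbove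
  have hMw : ∀ x y : V, |(w x y : ℝ)| ≤ M := fun x y => hM (Set.mem_range_self (x, y))
  have hM0 : (0 : ℝ) ≤ M := le_trans (abs_nonneg _) (hMw v v)
  obtain ⟨P, hP⟩ := (Set.finite_range fun x : V => |pot x|).bddAbove
  have hPw : ∀ x, |pot x| ≤ P := fun x => hP (Set.mem_range_self x)
  have hvalσ : ∀ x, val (σ x) = val x := fun x => by
    rw [hval, hval, mpVal_shift]
  have hstep : ∀ x, val (τ x) ≤ val x := by
    intro x
    rcases himp x (τ x) (hτ x) with h | h
    · linarith [hvalσ x]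
    · rw [← hvalσ x]; exact h.1.le
  set g : ℕ → ℝ := fun i => val (τ^[i] v) with hg
  have hanti : Antitone g := antitone_nat_of_succ_le (fun n => by
    have : τ^[n + 1] v = τ (τ^[n] v) := Function.iterate_succ_apply' τ n v
    simp only [hg, this]
    exact hstep _)
  have hSfin : (Set.range g).Finite := Set.Finite.subset (Set.finite_range val)
    (by rintro _ ⟨i, rfl⟩; exact ⟨τ^[i] v, rfl⟩)
  have hSne : (Set.range g).Nonempty := ⟨g 0, ⟨0, rfl⟩⟩
  obtain ⟨N, hN⟩ : ∃ N, g N = sInf (Set.range g) := hSne.csInf_mem hSfin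
  set c := g N with hc
  have hcle : ∀ i, c ≤ g i := fun i => by
    have h := csInf_le hSfin.bddBelow (Set.mem_range_self i)
    rw [← hN] at h; exact h
  have hconst : ∀ i, N ≤ i → g i = c := fun i hi =>
    le_antisymm (by rw [hc]; exact hanti hi) (hcle i)
  have hcycle : ∀ i, N ≤ i →
      (w (τ^[i] v) (τ^[i + 1] v) : ℝ) ≤ c + pot (τ^[i] v) - pot (τ^[i + 1] v) := by
    intro i hi
    set x := τ^[i] v with hx
    have hsucc : τ^[i + 1] v = τ x := Function.iterate_succ_apply' τ i v
    have hgi : val x = c := hconst i hi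
    have hgi1 : val (τ x) = c := by rw [← hsucc]; exact hconst (i + 1) (by omega)
    rcases himp x (τ x) (hτ x) with h | h
    · rw [hvalσ x, hgi, hgi1] at h; exact absurd h (lt_irrefl c)
    · have h2 := h.2
      rw [hvalσ x] at h2
      rw [hsucc]
      linarith [hpot x]
  set S : ℕ → ℝ := fun t => ((∑ i ∈ Finset.range t, w (τ^[i] v) (τ^[i + 1] v) : ℤ) : ℝ) with hS
  have habs : ∀ s : ℕ, |S s / s| ≤ M := by
    intro s
    cases s with
    | zero => simpa [hS] using hM0
    | succ n =>
      have hb : |S (n + 1)| ≤ (n + 1 : ℕ) * M := by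
        have h1 : |S (n + 1)| ≤ ∑ i ∈ Finset.range (n + 1), |(w (τ^[i] v) (τ^[i + 1] v) : ℝ)| := by
          rw [hS]; push_cast
          exact Finset.abs_sum_le_sum_abs _ _
        refine h1.trans ?_
        calc ∑ i ∈ Finset.range (n + 1), |(w (τ^[i] v) (τ^[i + 1] v) : ℝ)|
            ≤ ∑ _i ∈ Finset.range (n + 1), M := Finset.sum_le_sum fun i _ => hMw _ _
          _ = (n + 1 : ℕ) * M := by simp [mul_comm]
      rw [abs_div]
      have hpos : (0 : ℝ) < ((n + 1 : ℕ) : ℝ) := by positivity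
      rw [abs_of_pos hpos, div_le_iff₀ hpos]
      calc |S (n + 1)| ≤ (n + 1 : ℕ) * M := hb
        _ = M * ((n + 1 : ℕ) : ℝ) := by ring
  have htel : ∀ t : ℕ, S (N + t) ≤ S N + t * c + pot (τ^[N] v) - pot (τ^[N + t] v) := by
    intro t
    induction t with
    | zero => simp
    | succ t ih =>
      have h1 : S (N + t + 1) = S (N + t) + ((w (τ^[N + t] v) (τ^[N + t + 1] v) : ℤ) : ℝ) := by
        simp only [hS, Finset.sum_range_succ]; push_cast; ring
      have h2 := hcycle (N + t) (by omega)
      have h3 : N + (t + 1) = N + t + 1 := by omega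
      rw [h3, h1]
      push_cast
      push_cast at ih
      linarith
  set K : ℝ := |S N| + N * |c| + 2 * P with hK
  have hub : ∀ s : ℕ, N ≤ s → 1 ≤ s → S s / s ≤ c + K / s := by
    intro s hNs h1s
    obtain ⟨t, rfl⟩ : ∃ t, s = N + t := ⟨s - N, by omega⟩
    have h := htel t
    have hs0 : (0 : ℝ) < ((N + t : ℕ) : ℝ) := by
      have : (0 : ℕ) < N + t := by omega
      exact_mod_cast this
    have heq : (c + K / ((N + t : ℕ) : ℝ)) * ((N + t : ℕ) : ℝ)
        = c * ((N + t : ℕ) : ℝ) + K := by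
      have hs0' : ((N + t : ℕ) : ℝ) ≠ 0 := ne_of_gt hs0
      push_cast at hs0' ⊢
      field_simp
    rw [div_le_iff₀ hs0, heq]
    have hp1 := abs_le.1 (hPw (τ^[N] v))
    have hp2 := abs_le.1 (hPw (τ^[N + t] v))
    have hSN : S N ≤ |S N| := le_abs_self _
    have hNc : ((N : ℝ)) * (-|c|) ≤ (N : ℝ) * c :=
      mul_le_mul_of_nonneg_left (neg_abs_le c) (Nat.cast_nonneg N)
    push_cast
    push_cast at h
    rw [hK]
    linarith
  have hbb : Filter.IsBoundedUnder (· ≥ ·) Filter.atTop (fun s : ℕ => S s / s) :=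
    Filter.isBoundedUnder_of ⟨-M, fun s => neg_le_of_abs_le (habs s)⟩
  have hev : ∀ᶠ s in Filter.atTop, S s / s ≤ c + K / s := by
    filter_upwards [Filter.eventually_ge_atTop (max N 1)] with s hs
    exact hub s (le_trans (le_max_left _ _) hs) (le_trans (le_max_right _ _) hs)
  have htend : Filter.Tendsto (fun s : ℕ => c + K / s) Filter.atTop (nhds c) := by
    have h0 := tendsto_const_div_atTop_nhds_zero_nat K
    have := Filter.Tendsto.add (tendsto_const_nhds (x := c) (f := Filter.atTop (α := ℕ))) h0
    simpa using this
  have hcb2 : Filter.IsCoboundedUnder (· ≥ ·) Filter.atTop (fun s : ℕ => c + K / s) := by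
    refine Filter.isCoboundedUnder_ge_of_eventually_le _ (x := c + |K|) ?_
    filter_upwards [Filter.eventually_ge_atTop 1] with s hs
    have hs1 : (1 : ℝ) ≤ (s : ℝ) := by exact_mod_cast hs
    have : K / s ≤ |K| := by
      calc K / s ≤ |K / s| := le_abs_self _
        _ = |K| / s := by rw [abs_div, abs_of_pos (show (0:ℝ) < (s:ℝ) by linarith)]
        _ ≤ |K| := div_le_self (abs_nonneg _) hs1
    linarith
  have hfin : mpVal w τ v ≤ c := by
    calc mpVal w τ v = Filter.liminf (fun s : ℕ => S s / s) Filter.atTop := rfl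
      _ ≤ Filter.liminf (fun s : ℕ => c + K / s) Filter.atTop :=
          Filter.liminf_le_liminf hev hbb hcb2
      _ = c := htend.liminf_eq
  have hcv : c ≤ val v := by
    have h0 : g N ≤ g 0 := hanti (Nat.zero_le N)
    have : g 0 = val v := by simp [hg]
    rw [hc]; linarith
  rw [hval v] at hcv
  linarith
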